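/- For n ≥ 2, exactly half of all clans on {1,...,n} are even; that is, the number of even clans equals the number of odd clans. -/

import Mathlib

/-- Data of a putative clan on `{1,...,n}` (encoded as `Fin n`):
signed singletons `(a, ε)` and signed pairs `(a, b)^ε`, where `true` = `+`. -/
abbrev ClanData (n : ℕ) := Finset (Fin n × Bool) × Finset (Fin n × Fin n × Bool)

/-- Number of occurrences of `i` among the numerical coordinates of `c`. -/
def occCount {n : ℕ} (c : ClanData n) (i : Fin n) : ℕ :=
  (c.1.filter (fun p => p.1 = i)).card + (c.2.filter (fun p => p.1 = i ∨ p.2.1 = i)).card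

/-- `c` is a clan: in every pair `(a,b)^ε` we have `a < b`, and every index
occurs exactly once among the coordinates. -/
def IsClan {n : ℕ} (c : ClanData n) : Prop :=
  (∀ p ∈ c.2, p.1 < p.2.1) ∧ ∀ i, occCount c i = 1

instance {n : ℕ} : DecidablePred (IsClan (n := n)) := fun c => by
  unfold IsClan; infer_instance

/-- The set of clans on `{1,...,n}`. -/
def Clan (n : ℕ) := {c : ClanData n // IsClan c}

instance {n : ℕ} : Fintype (Clan n) := Subtype.fintype _

/-- A clan is even if the number of pairs `(a,b)^+` has the same parity as
the number of singletons bearing a `-` sign. -/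
def IsEven {n : ℕ} (c : ClanData n) : Prop :=
  (c.2.filter (fun p => p.2.2 = true)).card % 2 = (c.1.filter (fun p => p.2 = false)).card % 2

instance {n : ℕ} (c : ClanData n) : Decidable (IsEven c) := by
  unfold IsEven; infer_instance

namespace ClanAux

variable {n : ℕ}

def g1 (i : Fin n) (p : Fin n × Bool) : Fin n × Bool :=
  (p.1, if p.1 = i then !p.2 else p.2)

def g2 (i : Fin n) (p : Fin n × Fin n × Bool) : Fin n × Fin n × Bool :=
  (p.1, p.2.1, if p.1 = i ∨ p.2.1 = i then !p.2.2 else p.2.2)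

lemma g1_invol (i : Fin n) : Function.Involutive (g1 i) := by
  intro p; obtain ⟨a,b⟩ := p; unfold g1; by_cases h : a = i <;> simp [h]

lemma g2_invol (i : Fin n) : Function.Involutive (g2 i) := by
  intro p; obtain ⟨a,b,e⟩ := p; unfold g2; by_cases h : a = i ∨ b = i <;> simp [h]

def flip (i : Fin n) (c : ClanData n) : ClanData n :=
  (c.1.image (g1 i), c.2.image (g2 i))

lemma flip_flip (i : Fin n) (c : ClanData n) : flip i (flip i c) = c := by
  unfold flip
  simp [Finset.image_image, Function.comp_def, (g1_invol i).comp_self,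
    (g2_invol i).comp_self, g1_invol i _, g2_invol i _]

lemma card_filter_image_g1 (i : Fin n) (s : Finset (Fin n × Bool))
    (q : Fin n × Bool → Prop) [DecidablePred q] :
    ((s.image (g1 i)).filter q).card = (s.filter (fun x => q (g1 i x))).card := by
  rw [Finset.filter_image]
  exact Finset.card_image_of_injective _ (g1_invol i).injective

lemma card_filter_image_g2 (i : Fin n) (s : Finset (Fin n × Fin n × Bool))
    (q : Fin n × Fin n × Bool → Prop) [DecidablePred q] :
    ((s.image (g2 i)).filter q).card = (s.filter (fun x => q (g2 i x))).card := by
  rw [Finset.filter_image]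
  exact Finset.card_image_of_injective _ (g2_invol i).injective

lemma isClan_flip (i : Fin n) (c : ClanData n) (h : IsClan c) : IsClan (flip i c) := by
  obtain ⟨h1, h2⟩ := h
  constructor
  · intro p hp
    simp only [flip, Finset.mem_image] at hp
    obtain ⟨q, hq, rfl⟩ := hp
    exact h1 q hq
  · intro j
    have := h2 j
    unfold occCount flip at *
    rw [card_filter_image_g1, card_filter_image_g2]
    rw [← this]
    congr 1 <;> congr 1 <;> apply Finset.filter_congr <;> simp [g1, g2]

end ClanAux

namespace ClanAux

variable {n : ℕ}

lemma cast_card_filter {α : Type*} (s : Finset α) (q : α → Prop) [DecidablePred q] :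
    (((s.filter q).card : ZMod 2)) = ∑ x ∈ s, if q x then (1 : ZMod 2) else 0 := by
  rw [Finset.card_filter]
  push_cast
  rfl

lemma parity_flip (i : Fin n) (c : ClanData n) :
    (((flip i c).2.filter (fun p => p.2.2 = true)).card : ZMod 2) +
     (((flip i c).1.filter (fun p => p.2 = false)).card : ZMod 2)
    = (((c.2.filter (fun p => p.2.2 = true)).card : ZMod 2) +
       ((c.1.filter (fun p => p.2 = false)).card : ZMod 2)) + (occCount c i : ZMod 2) := by
  unfold flip
  rw [card_filter_image_g1, card_filter_image_g2]
  unfold occCount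
  push_cast
  rw [cast_card_filter, cast_card_filter, cast_card_filter, cast_card_filter,
    cast_card_filter, cast_card_filter]
  have h2 : ∀ p : Fin n × Fin n × Bool,
      (if (g2 i p).2.2 = true then (1 : ZMod 2) else 0)
      = (if p.1 = i ∨ p.2.1 = i then (1 : ZMod 2) else 0)
        + (if p.2.2 = true then (1 : ZMod 2) else 0) := by
    intro p
    unfold g2
    by_cases h : p.1 = i ∨ p.2.1 = i <;> cases hb : p.2.2 <;> simp [h, hb] <;> decide
  have h1 : ∀ p : Fin n × Bool,
      (if (g1 i p).2 = false then (1 : ZMod 2) else 0)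
      = (if p.1 = i then (1 : ZMod 2) else 0) + (if p.2 = false then (1 : ZMod 2) else 0) := by
    intro p
    unfold g1
    by_cases h : p.1 = i <;> cases hb : p.2 <;> simp [h, hb] <;> decide
  simp only [h1, h2, Finset.sum_add_distrib]
  ring

lemma isEven_iff (c : ClanData n) :
    IsEven c ↔ ((c.2.filter (fun p => p.2.2 = true)).card : ZMod 2)
      = ((c.1.filter (fun p => p.2 = false)).card : ZMod 2) := by
  rw [IsEven, ZMod.natCast_eq_natCast_iff']

lemma isEven_flip_iff (i : Fin n) (c : ClanData n) (h : IsClan c) :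
    IsEven (flip i c) ↔ ¬ IsEven c := by
  have hp := parity_flip i c
  rw [h.2 i] at hp
  rw [isEven_iff, isEven_iff]
  revert hp
  generalize (((flip i c).2.filter (fun p => p.2.2 = true)).card : ZMod 2) = a'
  generalize (((flip i c).1.filter (fun p => p.2 = false)).card : ZMod 2) = b'
  generalize ((c.2.filter (fun p => p.2.2 = true)).card : ZMod 2) = a
  generalize ((c.1.filter (fun p => p.2 = false)).card : ZMod 2) = b
  revert a b a' b'
  decide

def clanFlip (i : Fin n) : Clan n ≃ Clan n where
  toFun c := ⟨flip i c.1, isClan_flip i c.1 c.2⟩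
  invFun c := ⟨flip i c.1, isClan_flip i c.1 c.2⟩
  left_inv c := Subtype.ext (flip_flip i c.1)
  right_inv c := Subtype.ext (flip_flip i c.1)

end ClanAux

/-- For `n ≥ 2`, exactly half of all clans on `{1,...,n}` are even: the number
of even clans equals the number of odd clans. -/
theorem card_even_clans_eq_card_odd_clans (n : ℕ) (hn : 2 ≤ n) :
    Fintype.card {σ : Clan n // IsEven σ.1} = Fintype.card {σ : Clan n // ¬ IsEven σ.1} := by
  classical
  let i : Fin n := ⟨0, by omega⟩
  refine Fintype.card_congr ?_
  exact
  { toFun := fun σ => ⟨(ClanAux.clanFlip i) σ.1, by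
      rw [show ((ClanAux.clanFlip i) σ.1).1 = ClanAux.flip i σ.1.1 from rfl,
        ClanAux.isEven_flip_iff i σ.1.1 σ.1.2]
      exact not_not_intro σ.2⟩
    invFun := fun σ => ⟨(ClanAux.clanFlip i) σ.1, by
      rw [show ((ClanAux.clanFlip i) σ.1).1 = ClanAux.flip i σ.1.1 from rfl,
        ClanAux.isEven_flip_iff i σ.1.1 σ.1.2]
      exact σ.2⟩
    left_inv := fun σ => Subtype.ext ((ClanAux.clanFlip i).left_inv σ.1)
    right_inv := fun σ => Subtype.ext ((ClanAux.clanFlip i).right_inv σ.1) }
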